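/- For 0 < α < 2/3, let D'₈(α) be the octagon with vertices v₁ = (3/2 - 5α/4, -2), v₂ = (-1/2 - 5α/4, -2), v₃ = (α/4 - 3/2, 0), v₄ = (α/4 - 3/2, 1), v₅ = -v₁, ..., v₈ = -v₄, and let Λ(α) be the lattice generated by (2,0) and (1 + α/2, 1). Then D'₈(α) + Λ(α) is a five-fold tiling of ℝ². -/

import Mathlib

set_option maxHeartbeats 1000000
set_option linter.unusedTactic false
set_option linter.unreachableTactic false
set_option linter.unnecessarySeqFocus false
set_option linter.unusedVariables false

/-- `K + X` is a `k`-fold tiling of the plane. -/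
def IsKFoldTiling (K X : Set (ℝ × ℝ)) (k : ℕ) : Prop :=
  (∀ y : ℝ × ℝ, ∃ S : Finset (ℝ × ℝ), ↑S ⊆ {x ∈ X | y - x ∈ K} ∧ k ≤ S.card) ∧
  (∀ y : ℝ × ℝ, ∀ S : Finset (ℝ × ℝ), ↑S ⊆ {x ∈ X | y - x ∈ interior K} → S.card ≤ k)

/-- The octagon `D'₈(α)` with vertices `(3/2 - 5α/4, -2), (-1/2 - 5α/4, -2),
(α/4 - 3/2, 0), (α/4 - 3/2, 1)` and their negatives. -/
noncomputable def D₈'α (α : ℝ) : Set (ℝ × ℝ) :=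
  convexHull ℝ {((3:ℝ)/2 - 5*α/4, -(2:ℝ)), (-(1:ℝ)/2 - 5*α/4, -(2:ℝ)),
    (α/4 - (3:ℝ)/2, (0:ℝ)), (α/4 - (3:ℝ)/2, (1:ℝ)),
    (5*α/4 - (3:ℝ)/2, (2:ℝ)), ((1:ℝ)/2 + 5*α/4, (2:ℝ)),
    ((3:ℝ)/2 - α/4, (0:ℝ)), ((3:ℝ)/2 - α/4, -(1:ℝ))}

/-- The lattice `Λ(α)` generated by `(2,0)` and `(1 + α/2, 1)`. -/
def Λα (α : ℝ) : Set (ℝ × ℝ) :=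
  {p | ∃ m n : ℤ, p = (2*m + n*(1 + α/2), (n : ℝ))}

section helpers
variable {α : ℝ}
lemma convexD : Convex ℝ (D₈'α α) := convex_convexHull ℝ _
lemma vmem (p : ℝ × ℝ) (hp : p ∈ ({((3:ℝ)/2 - 5*α/4, -(2:ℝ)), (-(1:ℝ)/2 - 5*α/4, -(2:ℝ)),
    (α/4 - (3:ℝ)/2, (0:ℝ)), (α/4 - (3:ℝ)/2, (1:ℝ)),
    (5*α/4 - (3:ℝ)/2, (2:ℝ)), ((1:ℝ)/2 + 5*α/4, (2:ℝ)),
    ((3:ℝ)/2 - α/4, (0:ℝ)), ((3:ℝ)/2 - α/4, -(1:ℝ))} : Set (ℝ × ℝ))) : p ∈ D₈'α α :=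
  subset_convexHull ℝ _ hp
lemma between_mem {K : Set (ℝ × ℝ)} (hK : Convex ℝ K) {xl xr x t : ℝ}
    (hA : (xl, t) ∈ K) (hB : (xr, t) ∈ K) (h1 : xl ≤ x) (h2 : x ≤ xr) : (x, t) ∈ K := by
  rcases eq_or_lt_of_le (h1.trans h2) with h | h
  · have : x = xl := le_antisymm (h ▸ h2) h1
    exact this ▸ hA
  · set φ : ℝ := (x - xl) / (xr - xl) with hφ
    have hd : (0:ℝ) < xr - xl := by linarith
    have h0 : 0 ≤ 1 - φ := by rw [hφ, sub_nonneg, div_le_one hd]; linarith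
    have h0' : 0 ≤ φ := div_nonneg (by linarith) hd.le
    have key : (1 - φ) • ((xl, t) : ℝ × ℝ) + φ • ((xr, t) : ℝ × ℝ) = (x, t) := by
      have : (1 - φ) * xl + φ * xr = x := by rw [hφ]; field_simp; ring
      simp [Prod.ext_iff, Prod.smul_def, smul_eq_mul]
      constructor
      · linarith [this]
      · ring
    have := hK hA hB h0 h0' (by ring)
    rwa [key] at this
lemma comb_mem {K : Set (ℝ × ℝ)} (hK : Convex ℝ K) {P Q : ℝ × ℝ}
    (hP : P ∈ K) (hQ : Q ∈ K) {θ : ℝ} (h0 : 0 ≤ θ) (h1 : θ ≤ 1) :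
    (1 - θ) • P + θ • Q ∈ K := hK hP hQ (by linarith) h0 (by ring)

-- vertices
lemma v1mem : ((3:ℝ)/2 - 5*α/4, -(2:ℝ)) ∈ D₈'α α := vmem _ (by simp)
lemma v2mem : (-(1:ℝ)/2 - 5*α/4, -(2:ℝ)) ∈ D₈'α α := vmem _ (by simp)
lemma v3mem : (α/4 - (3:ℝ)/2, (0:ℝ)) ∈ D₈'α α := vmem _ (by simp)
lemma v4mem : (α/4 - (3:ℝ)/2, (1:ℝ)) ∈ D₈'α α := vmem _ (by simp)
lemma v5mem : (5*α/4 - (3:ℝ)/2, (2:ℝ)) ∈ D₈'α α := vmem _ (by simp)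
lemma v6mem : ((1:ℝ)/2 + 5*α/4, (2:ℝ)) ∈ D₈'α α := vmem _ (by simp)
lemma v7mem : ((3:ℝ)/2 - α/4, (0:ℝ)) ∈ D₈'α α := vmem _ (by simp)
lemma v8mem : ((3:ℝ)/2 - α/4, -(1:ℝ)) ∈ D₈'α α := vmem _ (by simp)

lemma mid67mem : ((1 + α/2 : ℝ), (1:ℝ)) ∈ D₈'α α := by
  have := comb_mem convexD (v6mem (α := α)) (v7mem (α := α))
      (θ := 1/2) (by norm_num) (by norm_num)
  have e : ((1:ℝ) - 1/2) • (((1:ℝ)/2 + 5*α/4, (2:ℝ)) : ℝ × ℝ)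
      + (1/2 : ℝ) • (((3:ℝ)/2 - α/4, (0:ℝ)) : ℝ × ℝ) = ((1 + α/2 : ℝ), (1:ℝ)) := by
    simp [Prod.ext_iff, Prod.smul_def, smul_eq_mul]; constructor <;> ring
  rwa [e] at this
lemma mid23mem : ((-1 - α/2 : ℝ), (-1:ℝ)) ∈ D₈'α α := by
  have := comb_mem convexD (v2mem (α := α)) (v3mem (α := α))
      (θ := 1/2) (by norm_num) (by norm_num)
  have e : ((1:ℝ) - 1/2) • ((-(1:ℝ)/2 - 5*α/4, -(2:ℝ)) : ℝ × ℝ)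
      + (1/2 : ℝ) • ((α/4 - (3:ℝ)/2, (0:ℝ)) : ℝ × ℝ) = ((-1 - α/2 : ℝ), (-1:ℝ)) := by
    simp [Prod.ext_iff, Prod.smul_def, smul_eq_mul]; constructor <;> ring
  rwa [e] at this

/-- edge point lemma: given P Q in K, the point at parameter θ is in K, with explicit coords -/
lemma edge_pt {P Q : ℝ × ℝ} (hP : P ∈ D₈'α α) (hQ : Q ∈ D₈'α α) {θ : ℝ}
    (h0 : 0 ≤ θ) (h1 : θ ≤ 1) {x t : ℝ}
    (hx : (1 - θ) * P.1 + θ * Q.1 = x) (ht : (1 - θ) * P.2 + θ * Q.2 = t) :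
    (x, t) ∈ D₈'α α := by
  have := comb_mem convexD hP hQ h0 h1
  have e : (1 - θ) • P + θ • Q = (x, t) := by
    simp [Prod.ext_iff, Prod.smul_def, smul_eq_mul]
    exact ⟨hx, ht⟩
  rwa [e] at this

-- Row lemmas : closed membership
lemma row0_mem {q t : ℝ} (ht0 : 0 ≤ t) (ht1 : t ≤ 1)
    (hl : α/4 - 3/2 ≤ q) (hr : q ≤ 3/2 - α/4 + t*(3*α/4 - 1/2)) :
    (q, t) ∈ D₈'α α := by
  have hL : ((α/4 - 3/2 : ℝ), t) ∈ D₈'α α :=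
    edge_pt v3mem v4mem ht0 ht1 (by simp <;> ring) (by simp)
  have hR : ((3/2 - α/4 + t*(3*α/4 - 1/2) : ℝ), t) ∈ D₈'α α :=
    edge_pt v7mem mid67mem ht0 ht1 (by simp <;> ring) (by simp)
  exact between_mem convexD hL hR hl hr

lemma rowm1_mem {q t : ℝ} (ht0 : 1 ≤ t) (ht1 : t ≤ 2)
    (hl : -(3:ℝ)/2 - 3*α/4 + α*t ≤ q) (hr : q ≤ 3/2 - α/4 + t*(3*α/4 - 1/2)) :
    (q, t) ∈ D₈'α α := by
  have h0 : 0 ≤ t - 1 := by linarith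
  have h1 : t - 1 ≤ 1 := by linarith
  have hL : ((-(3:ℝ)/2 - 3*α/4 + α*t : ℝ), t) ∈ D₈'α α :=
    edge_pt v4mem v5mem h0 h1 (by simp <;> ring) (by simp <;> ring)
  have hR : ((3/2 - α/4 + t*(3*α/4 - 1/2) : ℝ), t) ∈ D₈'α α :=
    edge_pt mid67mem v6mem h0 h1 (by simp <;> ring) (by simp <;> ring)
  exact between_mem convexD hL hR hl hr

lemma row1_mem {q t : ℝ} (ht0 : -1 ≤ t) (ht1 : t ≤ 0)
    (hl : -(3:ℝ)/2 + α/4 + t*(3*α/4 - 1/2) ≤ q) (hr : q ≤ 3/2 - α/4) :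
    (q, t) ∈ D₈'α α := by
  have h0 : 0 ≤ t + 1 := by linarith
  have h1 : t + 1 ≤ 1 := by linarith
  have hL : ((-(3:ℝ)/2 + α/4 + t*(3*α/4 - 1/2) : ℝ), t) ∈ D₈'α α :=
    edge_pt mid23mem v3mem h0 h1 (by simp <;> ring) (by simp <;> ring)
  have hR : (((3:ℝ)/2 - α/4 : ℝ), t) ∈ D₈'α α :=
    edge_pt v8mem v7mem h0 h1 (by simp <;> ring) (by simp <;> ring)
  exact between_mem convexD hL hR hl hr

lemma row2_mem {q t : ℝ} (ht0 : -2 ≤ t) (ht1 : t ≤ -1)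
    (hl : -(3:ℝ)/2 + α/4 + t*(3*α/4 - 1/2) ≤ q) (hr : q ≤ 3/2 + 3*α/4 + α*t) :
    (q, t) ∈ D₈'α α := by
  have h0 : 0 ≤ t + 2 := by linarith
  have h1 : t + 2 ≤ 1 := by linarith
  have hL : ((-(3:ℝ)/2 + α/4 + t*(3*α/4 - 1/2) : ℝ), t) ∈ D₈'α α :=
    edge_pt v2mem mid23mem h0 h1 (by simp <;> ring) (by simp <;> ring)
  have hR : (((3:ℝ)/2 + 3*α/4 + α*t : ℝ), t) ∈ D₈'α α :=
    edge_pt v1mem v8mem h0 h1 (by simp <;> ring) (by simp <;> ring)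
  exact between_mem convexD hL hR hl hr


section facets
variable {α : ℝ}

/-- a single closed halfplane containing D₈'α -/
lemma facet_le (c d e : ℝ)
    (hv : ∀ p ∈ ({((3:ℝ)/2 - 5*α/4, -(2:ℝ)), (-(1:ℝ)/2 - 5*α/4, -(2:ℝ)),
      (α/4 - (3:ℝ)/2, (0:ℝ)), (α/4 - (3:ℝ)/2, (1:ℝ)),
      (5*α/4 - (3:ℝ)/2, (2:ℝ)), ((1:ℝ)/2 + 5*α/4, (2:ℝ)),
      ((3:ℝ)/2 - α/4, (0:ℝ)), ((3:ℝ)/2 - α/4, -(1:ℝ))} : Set (ℝ × ℝ)),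
      c * p.1 + d * p.2 ≤ e) :
    ∀ q ∈ D₈'α α, c * q.1 + d * q.2 ≤ e := by
  intro q hq
  have hcx : Convex ℝ {p : ℝ × ℝ | c * p.1 + d * p.2 ≤ e} := by
    intro p hp r hr a b ha hb hab
    simp only [Set.mem_setOf_eq] at *
    have : (a • p + b • r).1 = a * p.1 + b * r.1 := rfl
    have h2 : (a • p + b • r).2 = a * p.2 + b * r.2 := rfl
    rw [this, h2]
    have he : a * e + b * e = e := by rw [← add_mul, hab, one_mul]
    nlinarith [mul_le_mul_of_nonneg_left hp ha, mul_le_mul_of_nonneg_left hr hb]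
  exact convexHull_min hv hcx hq

/-- strict inequality from interior -/
lemma facet_lt {c d e : ℝ} (hcd : c ≠ 0 ∨ d ≠ 0)
    (hK : ∀ q ∈ D₈'α α, c * q.1 + d * q.2 ≤ e)
    {q : ℝ × ℝ} (hq : q ∈ interior (D₈'α α)) : c * q.1 + d * q.2 < e := by
  obtain ⟨ε, hε, hball⟩ := Metric.isOpen_iff.1 isOpen_interior q hq
  have habs : 0 < |c| + |d| := by
    rcases hcd with h | h
    · have := abs_pos.2 h; positivity
    · have := abs_pos.2 h
      have : 0 ≤ |c| := abs_nonneg c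
      linarith [abs_pos.2 h]
  set δ : ℝ := ε / (2 * (|c| + |d|)) with hδ
  have hδpos : 0 < δ := by positivity
  have hmem : (q.1 + δ * c, q.2 + δ * d) ∈ Metric.ball q ε := by
    rw [Metric.mem_ball]
    have h1 : dist ((q.1 + δ * c, q.2 + δ * d) : ℝ × ℝ) q
        = max (dist (q.1 + δ * c) q.1) (dist (q.2 + δ * d) q.2) := Prod.dist_eq
    rw [h1]
    have e1 : dist (q.1 + δ * c) q.1 = δ * |c| := by
      rw [Real.dist_eq, (by ring : q.1 + δ * c - q.1 = δ * c), abs_mul,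
        abs_of_nonneg hδpos.le]
    have e2 : dist (q.2 + δ * d) q.2 = δ * |d| := by
      rw [Real.dist_eq, (by ring : q.2 + δ * d - q.2 = δ * d), abs_mul,
        abs_of_nonneg hδpos.le]
    rw [e1, e2]
    have hc : δ * |c| < ε := by
      have : δ * (|c| + |d|) = ε / 2 := by rw [hδ]; field_simp
      nlinarith [abs_nonneg c, abs_nonneg d]
    have hd2 : δ * |d| < ε := by
      have : δ * (|c| + |d|) = ε / 2 := by rw [hδ]; field_simp
      nlinarith [abs_nonneg c, abs_nonneg d]
    exact max_lt hc hd2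
  have hmemK : (q.1 + δ * c, q.2 + δ * d) ∈ D₈'α α := interior_subset (hball hmem)
  have := hK _ hmemK
  simp only at this
  have hpos : 0 < δ * (c^2 + d^2) := by
    apply mul_pos hδpos
    rcases hcd with h | h
    · positivity
    · positivity
  nlinarith [this]
end facets

section strict
set_option maxHeartbeats 1000000
variable {α : ℝ}

lemma vertex_check (h0 : 0 < α) (h1 : α < 2/3) (c d e : ℝ)
    (H : ∀ p ∈ [((3:ℝ)/2 - 5*α/4, -(2:ℝ)), (-(1:ℝ)/2 - 5*α/4, -(2:ℝ)),
      (α/4 - (3:ℝ)/2, (0:ℝ)), (α/4 - (3:ℝ)/2, (1:ℝ)),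
      (5*α/4 - (3:ℝ)/2, (2:ℝ)), ((1:ℝ)/2 + 5*α/4, (2:ℝ)),
      ((3:ℝ)/2 - α/4, (0:ℝ)), ((3:ℝ)/2 - α/4, -(1:ℝ))], c * p.1 + d * p.2 ≤ e) :
    ∀ p ∈ ({((3:ℝ)/2 - 5*α/4, -(2:ℝ)), (-(1:ℝ)/2 - 5*α/4, -(2:ℝ)),
      (α/4 - (3:ℝ)/2, (0:ℝ)), (α/4 - (3:ℝ)/2, (1:ℝ)),
      (5*α/4 - (3:ℝ)/2, (2:ℝ)), ((1:ℝ)/2 + 5*α/4, (2:ℝ)),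
      ((3:ℝ)/2 - α/4, (0:ℝ)), ((3:ℝ)/2 - α/4, -(1:ℝ))} : Set (ℝ × ℝ)),
      c * p.1 + d * p.2 ≤ e := by
  intro p hp
  simp only [Set.mem_insert_iff, Set.mem_singleton_iff] at hp
  rcases hp with h|h|h|h|h|h|h|h <;> subst h <;>
    simp only [List.mem_cons, List.mem_singleton] at H <;>
    [exact H _ (by tauto); exact H _ (by tauto); exact H _ (by tauto); exact H _ (by tauto);
     exact H _ (by tauto); exact H _ (by tauto); exact H _ (by tauto); exact H _ (by tauto)]

lemma interior_facets (h0 : 0 < α) (h1 : α < 2/3) {q : ℝ × ℝ}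
    (hq : q ∈ interior (D₈'α α)) :
    (-2 < q.2 ∧ q.2 < 2) ∧ (-(3/2 - α/4) < q.1 ∧ q.1 < 3/2 - α/4) ∧
    (-(3/2 - α/4) < q.1 + (1/2 - 3*α/4) * q.2 ∧ q.1 + (1/2 - 3*α/4) * q.2 < 3/2 - α/4) ∧
    (-(3/2 + 3*α/4) < q.1 - α * q.2 ∧ q.1 - α * q.2 < 3/2 + 3*α/4) := by
  have gen : ∀ c d e : ℝ, (c ≠ 0 ∨ d ≠ 0) →
      (∀ p ∈ [((3:ℝ)/2 - 5*α/4, -(2:ℝ)), (-(1:ℝ)/2 - 5*α/4, -(2:ℝ)),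
      (α/4 - (3:ℝ)/2, (0:ℝ)), (α/4 - (3:ℝ)/2, (1:ℝ)),
      (5*α/4 - (3:ℝ)/2, (2:ℝ)), ((1:ℝ)/2 + 5*α/4, (2:ℝ)),
      ((3:ℝ)/2 - α/4, (0:ℝ)), ((3:ℝ)/2 - α/4, -(1:ℝ))], c * p.1 + d * p.2 ≤ e) →
      c * q.1 + d * q.2 < e := by
    intro c d e hcd H
    exact facet_lt hcd (facet_le c d e (vertex_check h0 h1 c d e H)) hq
  refine ⟨⟨?_, ?_⟩, ⟨?_, ?_⟩, ⟨?_, ?_⟩, ⟨?_, ?_⟩⟩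
  · have := gen 0 (-1) 2 (by norm_num) (by intro p hp; fin_cases hp <;> norm_num <;> linarith)
    linarith
  · have := gen 0 1 2 (by norm_num) (by intro p hp; fin_cases hp <;> norm_num <;> linarith)
    linarith
  · have := gen (-1) 0 (3/2 - α/4) (by norm_num)
      (by intro p hp; fin_cases hp <;> norm_num <;> linarith)
    linarith
  · have := gen 1 0 (3/2 - α/4) (by norm_num)
      (by intro p hp; fin_cases hp <;> norm_num <;> linarith)
    linarith
  · have := gen (-1) (-(1/2 - 3*α/4)) (3/2 - α/4) (by norm_num)
      (by intro p hp; fin_cases hp <;> norm_num <;> linarith)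
    linarith
  · have := gen 1 (1/2 - 3*α/4) (3/2 - α/4) (by norm_num)
      (by intro p hp; fin_cases hp <;> norm_num <;> linarith)
    linarith
  · have := gen (-1) α (3/2 + 3*α/4) (by norm_num)
      (by intro p hp; fin_cases hp <;> norm_num <;> linarith)
    linarith
  · have := gen 1 (-α) (3/2 + 3*α/4) (by norm_num)
      (by intro p hp; fin_cases hp <;> norm_num <;> linarith)
    linarith

end strict

section reduced
variable {α : ℝ}


lemma lower_reduced (h0 : 0 < α) (h1 : α < 2/3) (y : ℝ × ℝ)
    (hv0 : 0 ≤ y.2) (hv1 : y.2 < 1) :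
    ∃ S : Finset (ℝ × ℝ), ↑S ⊆ {x ∈ Λα α | y - x ∈ D₈'α α} ∧ 5 ≤ S.card := by
  set x := y.1
  set v := y.2
  set Am : ℝ := (x + 5/2 + α/4 - α*v)/2 with hAm
  set A0 : ℝ := (x + 3/2 - α/4)/2 with hA0
  set A1 : ℝ := (x + v*(1/2 - 3*α/4))/2 with hA1
  set A2 : ℝ := (x - 3/2 + α/4 + v*(1/2 - 3*α/4))/2 with hA2
  set R1 : Finset (ℤ × ℤ) := (Finset.Icc ⌈A1⌉ ⌊Am⌋).image (fun m => (m, (-1:ℤ))) with hR1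
  set R2 : Finset (ℤ × ℤ) := (Finset.Icc ⌈A2⌉ ⌊A0⌋).image (fun m => (m, (0:ℤ))) with hR2
  set R3 : Finset (ℤ × ℤ) := (Finset.Icc (⌈A0⌉-2) ⌊A1⌋).image (fun m => (m, (1:ℤ))) with hR3
  set R4 : Finset (ℤ × ℤ) := (Finset.Icc (⌈Am⌉-3) ⌊A2⌋).image (fun m => (m, (2:ℤ))) with hR4
  set T : Finset (ℤ × ℤ) := ((R1 ∪ R2) ∪ R3) ∪ R4 with hT
  have hinj : Function.Injective
      (fun mn : ℤ × ℤ => ((2*(mn.1:ℝ) + (mn.2:ℝ)*(1 + α/2), (mn.2:ℝ)) : ℝ × ℝ)) := by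
    rintro ⟨m, n⟩ ⟨m', n'⟩ h
    simp only [Prod.mk.injEq] at h
    obtain ⟨h1', h2'⟩ := h
    have hn : n = n' := by exact_mod_cast h2'
    subst hn
    have : (m : ℝ) = m' := by linarith
    have : m = m' := by exact_mod_cast this
    simp [this]
  refine ⟨T.image (fun mn : ℤ × ℤ => ((2*(mn.1:ℝ) + (mn.2:ℝ)*(1 + α/2), (mn.2:ℝ)) : ℝ × ℝ)),
    ?_, ?_⟩
  · intro p hp
    simp only [Finset.coe_image, Set.mem_image, Finset.mem_coe] at hp
    obtain ⟨⟨m, n⟩, hmn, rfl⟩ := hp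
    constructor
    · exact ⟨m, n, rfl⟩
    · -- membership in the octagon
      simp only [hT, Finset.mem_union, hR1, hR2, hR3, hR4, Finset.mem_image,
        Finset.mem_Icc] at hmn
      have hsub : y - ((2*(m:ℝ) + (n:ℝ)*(1 + α/2), (n:ℝ)) : ℝ × ℝ)
          = ((x - 2*(m:ℝ) - (n:ℝ)*(1 + α/2), v - (n:ℝ)) : ℝ × ℝ) := by
        rw [← Prod.mk.eta (p := y)]
        simp only [Prod.mk_sub_mk, Prod.mk.injEq]
        constructor <;> ring
      rw [hsub]
      rcases hmn with ((⟨m', ⟨hlo, hhi⟩, heq⟩ | ⟨m', ⟨hlo, hhi⟩, heq⟩) |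
          ⟨m', ⟨hlo, hhi⟩, heq⟩) | ⟨m', ⟨hlo, hhi⟩, heq⟩ <;>
        injection heq with e1 e2 <;> subst e1 <;> subst e2 <;>
        [skip; skip; skip; skip]
      · -- row n = -1
        have hu := Int.le_floor.1 hhi
        have hl' := Int.ceil_le.1 hlo
        rw [hAm] at hu; rw [hA1] at hl'
        apply rowm1_mem (α := α) <;> push_cast <;> linarith
      · -- row n = 0
        have hu := Int.le_floor.1 hhi
        have hl' := Int.ceil_le.1 hlo
        rw [hA0] at hu; rw [hA2] at hl'
        apply row0_mem (α := α) <;> push_cast <;> linarith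
      · -- row n = 1
        have hu := Int.le_floor.1 hhi
        have hl' : (⌈A0⌉ : ℝ) - 2 ≤ (m' : ℝ) := by exact_mod_cast hlo
        have hl2 : A0 ≤ (⌈A0⌉ : ℝ) := Int.le_ceil _
        rw [hA1] at hu; rw [hA0] at hl2
        apply row1_mem (α := α) <;> push_cast <;> linarith
      · -- row n = 2
        have hu := Int.le_floor.1 hhi
        have hl' : (⌈Am⌉ : ℝ) - 3 ≤ (m' : ℝ) := by exact_mod_cast hlo
        have hl2 : Am ≤ (⌈Am⌉ : ℝ) := Int.le_ceil _
        rw [hA2] at hu; rw [hAm] at hl2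
        apply row2_mem (α := α) <;> push_cast <;> linarith
  · -- cardinality at least 5
    rw [Finset.card_image_of_injective _ hinj]
    have key : ∀ (c c' : ℤ) (s s' : Finset ℤ), c ≠ c' →
        Disjoint (s.image (fun m => (m, c))) (s'.image (fun m => (m, c'))) := by
      intro c c' s s' hne
      rw [Finset.disjoint_left]
      rintro a ha hb
      simp only [Finset.mem_image] at ha hb
      obtain ⟨m1, _, rfl⟩ := ha
      obtain ⟨m2, _, h⟩ := hb
      injection h with h1 h2
      exact hne h2.symm
    have hinjc : ∀ c : ℤ, Function.Injective (fun m : ℤ => (m, c)) := by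
      intro c a b h
      injection h
    have d1 : Disjoint R1 R2 := key _ _ _ _ (by norm_num)
    have d2 : Disjoint (R1 ∪ R2) R3 :=
      Finset.disjoint_union_left.2 ⟨key _ _ _ _ (by norm_num), key _ _ _ _ (by norm_num)⟩
    have d3 : Disjoint ((R1 ∪ R2) ∪ R3) R4 :=
      Finset.disjoint_union_left.2 ⟨Finset.disjoint_union_left.2
        ⟨key _ _ _ _ (by norm_num), key _ _ _ _ (by norm_num)⟩, key _ _ _ _ (by norm_num)⟩
    rw [hT, Finset.card_union_of_disjoint d3, Finset.card_union_of_disjoint d2,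
      Finset.card_union_of_disjoint d1]
    rw [hR1, hR2, hR3, hR4, Finset.card_image_of_injective _ (hinjc _),
      Finset.card_image_of_injective _ (hinjc _), Finset.card_image_of_injective _ (hinjc _),
      Finset.card_image_of_injective _ (hinjc _), Int.card_Icc, Int.card_Icc, Int.card_Icc,
      Int.card_Icc]
    have c1 := Int.ceil_le_floor_add_one A1
    have c2 := Int.ceil_le_floor_add_one A2
    have c3 := Int.ceil_le_floor_add_one A0
    have c4 := Int.ceil_le_floor_add_one Am
    have t1 := Int.self_le_toNat (⌊Am⌋ + 1 - ⌈A1⌉)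
    have t2 := Int.self_le_toNat (⌊A0⌋ + 1 - ⌈A2⌉)
    have t3 := Int.self_le_toNat (⌊A1⌋ + 1 - (⌈A0⌉ - 2))
    have t4 := Int.self_le_toNat (⌊A2⌋ + 1 - (⌈Am⌉ - 3))
    have : (5 : ℤ) ≤ ((⌊Am⌋ + 1 - ⌈A1⌉).toNat : ℤ) + ((⌊A0⌋ + 1 - ⌈A2⌉).toNat : ℤ)
        + ((⌊A1⌋ + 1 - (⌈A0⌉ - 2)).toNat : ℤ) + ((⌊A2⌋ + 1 - (⌈Am⌉ - 3)).toNat : ℤ) := by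
      linarith
    exact_mod_cast this
end reduced

lemma upper_reduced (h0 : 0 < α) (h1 : α < 2/3) (y : ℝ × ℝ)
    (hv0 : 0 ≤ y.2) (hv1 : y.2 < 1) (S : Finset (ℝ × ℝ))
    (hS : ↑S ⊆ {x ∈ Λα α | y - x ∈ interior (D₈'α α)}) : S.card ≤ 5 := by
  set x := y.1
  set v := y.2
  set Am : ℝ := (x + 5/2 + α/4 - α*v)/2 with hAm
  set A0 : ℝ := (x + 3/2 - α/4)/2 with hA0
  set A1 : ℝ := (x + v*(1/2 - 3*α/4))/2 with hA1
  set A2 : ℝ := (x - 3/2 + α/4 + v*(1/2 - 3*α/4))/2 with hA2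
  set R1 : Finset (ℤ × ℤ) := (Finset.Icc (⌊A1⌋+1) (⌈Am⌉-1)).image (fun m => (m, (-1:ℤ))) with hR1
  set R2 : Finset (ℤ × ℤ) := (Finset.Icc (⌊A2⌋+1) (⌈A0⌉-1)).image (fun m => (m, (0:ℤ))) with hR2
  set R3 : Finset (ℤ × ℤ) := (Finset.Icc (⌊A0⌋-1) (⌈A1⌉-1)).image (fun m => (m, (1:ℤ))) with hR3
  set R4 : Finset (ℤ × ℤ) := (Finset.Icc (⌊Am⌋-2) (⌈A2⌉-1)).image (fun m => (m, (2:ℤ))) with hR4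
  set T : Finset (ℤ × ℤ) := ((R1 ∪ R2) ∪ R3) ∪ R4 with hT
  set f : ℤ × ℤ → ℝ × ℝ :=
    (fun mn : ℤ × ℤ => ((2*(mn.1:ℝ) + (mn.2:ℝ)*(1 + α/2), (mn.2:ℝ)) : ℝ × ℝ)) with hf
  have hsubU : S ⊆ T.image f := by
    intro p hp
    obtain ⟨hpΛ, hpK⟩ := hS hp
    obtain ⟨m, n, rfl⟩ := hpΛ
    have hsub : y - ((2*(m:ℝ) + (n:ℝ)*(1 + α/2), (n:ℝ)) : ℝ × ℝ)
        = ((x - 2*(m:ℝ) - (n:ℝ)*(1 + α/2), v - (n:ℝ)) : ℝ × ℝ) := by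
      rw [← Prod.mk.eta (p := y)]
      simp only [Prod.mk_sub_mk, Prod.mk.injEq]
      constructor <;> ring
    rw [hsub] at hpK
    obtain ⟨⟨hF1, hF2⟩, ⟨hF3, hF4⟩, ⟨hF5, hF6⟩, ⟨hF7, hF8⟩⟩ := interior_facets h0 h1 hpK
    dsimp only at hF1 hF2 hF3 hF4 hF5 hF6 hF7 hF8
    have hn2 : n < 3 := by
      have : (n:ℝ) < 3 := by linarith
      exact_mod_cast this
    have hn1 : -2 < n := by
      have : (-2:ℝ) < (n:ℝ) := by linarith
      exact_mod_cast this
    have hmemT : ((m, n) : ℤ × ℤ) ∈ T := by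
      rw [hT]
      simp only [Finset.mem_union]
      interval_cases n
      · -- n = -1
        push_cast at hF6 hF7
        left; left; left
        rw [hR1]
        apply Finset.mem_image.2
        refine ⟨m, Finset.mem_Icc.2 ⟨?_, ?_⟩, rfl⟩
        · have : A1 < (m:ℝ) := by rw [hA1]; linarith
          have := Int.floor_lt.2 this
          omega
        · have : (m:ℝ) < Am := by rw [hAm]; linarith
          have := Int.lt_ceil.2 this
          omega
      · -- n = 0
        push_cast at hF3 hF6
        left; left; right
        rw [hR2]
        apply Finset.mem_image.2
        refine ⟨m, Finset.mem_Icc.2 ⟨?_, ?_⟩, rfl⟩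
        · have : A2 < (m:ℝ) := by rw [hA2]; linarith
          have := Int.floor_lt.2 this
          omega
        · have : (m:ℝ) < A0 := by rw [hA0]; linarith
          have := Int.lt_ceil.2 this
          omega
      · -- n = 1
        push_cast at hF4 hF5
        left; right
        rw [hR3]
        apply Finset.mem_image.2
        refine ⟨m, Finset.mem_Icc.2 ⟨?_, ?_⟩, rfl⟩
        · have : A0 - 2 < (m:ℝ) := by rw [hA0]; linarith
          have h2 : A0 < (m:ℝ) + 2 := by linarith
          have := Int.floor_lt.2 (by exact_mod_cast h2 : A0 < ((m+2 : ℤ) : ℝ))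
          omega
        · have : (m:ℝ) < A1 := by rw [hA1]; linarith
          have := Int.lt_ceil.2 this
          omega
      · -- n = 2
        push_cast at hF5 hF8
        right
        rw [hR4]
        apply Finset.mem_image.2
        refine ⟨m, Finset.mem_Icc.2 ⟨?_, ?_⟩, rfl⟩
        · have h2 : Am < (m:ℝ) + 3 := by rw [hAm]; linarith
          have := Int.floor_lt.2 (by exact_mod_cast h2 : Am < ((m+3 : ℤ) : ℝ))
          omega
        · have : (m:ℝ) < A2 := by rw [hA2]; linarith
          have := Int.lt_ceil.2 this
          omega
    exact Finset.mem_coe.2 (Finset.mem_image.2 ⟨(m, n), hmemT, rfl⟩)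
  have hcards : (T.image f).card ≤ 5 := by
    calc (T.image f).card ≤ T.card := Finset.card_image_le
    _ ≤ ((R1 ∪ R2) ∪ R3).card + R4.card := by rw [hT]; exact Finset.card_union_le _ _
    _ ≤ (R1 ∪ R2).card + R3.card + R4.card := by
        have := Finset.card_union_le (R1 ∪ R2) R3; omega
    _ ≤ R1.card + R2.card + R3.card + R4.card := by
        have := Finset.card_union_le R1 R2; omega
    _ ≤ 5 := by
        have e1 : R1.card ≤ (⌈Am⌉ - 1 + 1 - (⌊A1⌋+1)).toNat := by
          rw [hR1]; refine le_trans Finset.card_image_le ?_; rw [Int.card_Icc]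
        have e2 : R2.card ≤ (⌈A0⌉ - 1 + 1 - (⌊A2⌋+1)).toNat := by
          rw [hR2]; refine le_trans Finset.card_image_le ?_; rw [Int.card_Icc]
        have e3 : R3.card ≤ (⌈A1⌉ - 1 + 1 - (⌊A0⌋-1)).toNat := by
          rw [hR3]; refine le_trans Finset.card_image_le ?_; rw [Int.card_Icc]
        have e4 : R4.card ≤ (⌈A2⌉ - 1 + 1 - (⌊Am⌋-2)).toNat := by
          rw [hR4]; refine le_trans Finset.card_image_le ?_; rw [Int.card_Icc]
        have hv1' : v ≤ 1 := hv1.le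
        -- real gap facts
        have hr1 : A1 + 1 ≤ Am := by
          rw [hA1, hAm]
          nlinarith [mul_nonneg (by linarith : (0:ℝ) ≤ 1 - v) (by linarith : (0:ℝ) ≤ 1/2 + α/4)]
        have hr2 : A2 + 1 ≤ A0 := by
          rw [hA2, hA0]
          nlinarith [mul_nonneg hv0 h0.le]
        have hr3 : A0 - 1 ≤ A1 := by
          rw [hA0, hA1]
          nlinarith [mul_nonneg hv0 h0.le, mul_nonneg (by linarith : (0:ℝ) ≤ 1 - v) h0.le]
        have hr4 : Am - 2 ≤ A2 := by
          rw [hAm, hA2]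
          nlinarith [mul_nonneg hv0 (by linarith : (0:ℝ) ≤ 1/2 + α/4)]
        -- integer nonnegativity
        have g1 : (0:ℤ) ≤ ⌈Am⌉ - 1 + 1 - (⌊A1⌋+1) := by
          have : ((⌊A1⌋ : ℝ) + 1) ≤ (⌈Am⌉ : ℝ) := by
            linarith [Int.floor_le A1, Int.le_ceil Am]
          have : (⌊A1⌋ + 1 : ℤ) ≤ ⌈Am⌉ := by exact_mod_cast this
          omega
        have g2 : (0:ℤ) ≤ ⌈A0⌉ - 1 + 1 - (⌊A2⌋+1) := by
          have : ((⌊A2⌋ : ℝ) + 1) ≤ (⌈A0⌉ : ℝ) := by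
            linarith [Int.floor_le A2, Int.le_ceil A0]
          have : (⌊A2⌋ + 1 : ℤ) ≤ ⌈A0⌉ := by exact_mod_cast this
          omega
        have g3 : (0:ℤ) ≤ ⌈A1⌉ - 1 + 1 - (⌊A0⌋-1) := by
          have : ((⌊A0⌋ : ℝ) - 1) ≤ (⌈A1⌉ : ℝ) := by
            linarith [Int.floor_le A0, Int.le_ceil A1]
          have : (⌊A0⌋ - 1 : ℤ) ≤ ⌈A1⌉ := by exact_mod_cast this
          omega
        have g4 : (0:ℤ) ≤ ⌈A2⌉ - 1 + 1 - (⌊Am⌋-2) := by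
          have : ((⌊Am⌋ : ℝ) - 2) ≤ (⌈A2⌉ : ℝ) := by
            linarith [Int.floor_le Am, Int.le_ceil A2]
          have : (⌊Am⌋ - 2 : ℤ) ≤ ⌈A2⌉ := by exact_mod_cast this
          omega
        have c1 := Int.ceil_le_floor_add_one Am
        have c2 := Int.ceil_le_floor_add_one A0
        have c3 := Int.ceil_le_floor_add_one A1
        have c4 := Int.ceil_le_floor_add_one A2
        have hz : (⌈Am⌉ - 1 + 1 - (⌊A1⌋+1)) + (⌈A0⌉ - 1 + 1 - (⌊A2⌋+1))
            + (⌈A1⌉ - 1 + 1 - (⌊A0⌋-1)) + (⌈A2⌉ - 1 + 1 - (⌊Am⌋-2)) ≤ (5:ℤ) := by omega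
        have htot : (⌈Am⌉ - 1 + 1 - (⌊A1⌋+1)).toNat + (⌈A0⌉ - 1 + 1 - (⌊A2⌋+1)).toNat
            + (⌈A1⌉ - 1 + 1 - (⌊A0⌋-1)).toNat + (⌈A2⌉ - 1 + 1 - (⌊Am⌋-2)).toNat ≤ 5 := by
          omega
        omega
  exact le_trans (Finset.card_le_card hsubU) hcards

section glue
variable {α : ℝ}

lemma lam_add {p q : ℝ × ℝ} (hp : p ∈ Λα α) (hq : q ∈ Λα α) : p + q ∈ Λα α := by
  obtain ⟨m, n, rfl⟩ := hp
  obtain ⟨m', n', rfl⟩ := hq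
  refine ⟨m + m', n + n', ?_⟩
  simp only [Prod.mk_add_mk, Prod.mk.injEq]
  push_cast
  constructor <;> ring

lemma lam_sub {p q : ℝ × ℝ} (hp : p ∈ Λα α) (hq : q ∈ Λα α) : p - q ∈ Λα α := by
  obtain ⟨m, n, rfl⟩ := hp
  obtain ⟨m', n', rfl⟩ := hq
  refine ⟨m - m', n - n', ?_⟩
  simp only [Prod.mk_sub_mk, Prod.mk.injEq]
  push_cast
  constructor <;> ring


/-- For `0 < α < 2/3`, `D'₈(α) + Λ(α)` is a five-fold tiling of the plane. -/
theorem D₈'α_fivefold_tiling (α : ℝ) (h0 : 0 < α) (h1 : α < 2/3) :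
    IsKFoldTiling (D₈'α α) (Λα α) 5 := by
  constructor
  · intro y
    set n₀ : ℤ := ⌊y.2⌋ with hn₀
    set lam : ℝ × ℝ := (((n₀:ℝ))*(1 + α/2), (n₀:ℝ)) with hlam
    have hlamΛ : lam ∈ Λα α := ⟨0, n₀, by rw [hlam]; norm_num⟩
    have hy2 : 0 ≤ (y - lam).2 := by
      have : (y - lam).2 = y.2 - (n₀:ℝ) := rfl
      rw [this, hn₀]
      linarith [Int.floor_le y.2]
    have hy2' : (y - lam).2 < 1 := by
      have : (y - lam).2 = y.2 - (n₀:ℝ) := rfl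
      rw [this, hn₀]
      linarith [Int.lt_floor_add_one y.2]
    obtain ⟨S, hSsub, hScard⟩ := lower_reduced h0 h1 (y - lam) hy2 hy2'
    refine ⟨S.image (· + lam), ?_, ?_⟩
    · intro p hp
      simp only [Finset.coe_image, Set.mem_image, Finset.mem_coe] at hp
      obtain ⟨s, hs, rfl⟩ := hp
      obtain ⟨hsΛ, hsK⟩ := hSsub hs
      refine ⟨lam_add hsΛ hlamΛ, ?_⟩
      have : y - (s + lam) = y - lam - s := by abel
      rw [this]
      exact hsK
    · rw [Finset.card_image_of_injective _ (add_left_injective lam)]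
      exact hScard
  · intro y S hS
    set n₀ : ℤ := ⌊y.2⌋ with hn₀
    set lam : ℝ × ℝ := (((n₀:ℝ))*(1 + α/2), (n₀:ℝ)) with hlam
    have hlamΛ : lam ∈ Λα α := ⟨0, n₀, by rw [hlam]; norm_num⟩
    have hy2 : 0 ≤ (y - lam).2 := by
      have : (y - lam).2 = y.2 - (n₀:ℝ) := rfl
      rw [this, hn₀]
      linarith [Int.floor_le y.2]
    have hy2' : (y - lam).2 < 1 := by
      have : (y - lam).2 = y.2 - (n₀:ℝ) := rfl
      rw [this, hn₀]
      linarith [Int.lt_floor_add_one y.2]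
    have hcard : S.card = (S.image (· - lam)).card :=
      (Finset.card_image_of_injective _ (sub_left_injective)).symm
    rw [hcard]
    apply upper_reduced h0 h1 (y - lam) hy2 hy2'
    intro p hp
    simp only [Finset.coe_image, Set.mem_image, Finset.mem_coe] at hp
    obtain ⟨s, hs, rfl⟩ := hp
    obtain ⟨hsΛ, hsK⟩ := hS hs
    refine ⟨lam_sub hsΛ hlamΛ, ?_⟩
    have : y - lam - (s - lam) = y - s := by abel
    rw [this]
    exact hsK
end glue
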